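/- (Corollary 1.) Let d ≥ 3 and let u : ℝ × ℝ^d → ℝ^d be a smooth real Schur flow satisfying the barotropic Euler equation with smooth potential Π. Set M = ⌊(d+1)/2⌋ and for 1 ≤ i ≤ M let Ω_i be the antisymmetric 2-form field with (Ω_i)_{jk} = ∂_j (U_i)_k − ∂_k (U_i)_j, where (U_i)_k = u_k if k ∈ {2i−1, 2i} and k ≤ d, and (U_i)_k = 0 otherwise. Then: (a) for any real constants c_1, …, c_M, the 2-form field Σ_{i=1}^M c_i Ω_i is Lie-transported by u; and (b) for any i, i' ∈ {1, …, M}, the 4-form field Ω_i ∧ Ω_{i'} is Lie-transported by u (in the p-form sense). -/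

import Mathlib

/-- Partial derivative in time of a function on `ℝ × ℝ^d`. -/
noncomputable def pdt {d : ℕ} (f : ℝ × (Fin d → ℝ) → ℝ) (p : ℝ × (Fin d → ℝ)) : ℝ :=
  fderiv ℝ f p (1, 0)

/-- Partial derivative in the `j`-th spatial coordinate of a function on `ℝ × ℝ^d`. -/
noncomputable def pdx {d : ℕ} (j : Fin d) (f : ℝ × (Fin d → ℝ) → ℝ) (p : ℝ × (Fin d → ℝ)) : ℝ :=
  fderiv ℝ f p (0, Pi.single j 1)

/-- Real Schur flow: with 1-based indices `J = j+1`, `K = k+1`, we have `∂_J u_K = 0`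
whenever `J > 2⌈K/2⌉`; here `⌈K/2⌉ = (K+1)/2` in natural-number division. -/
def IsRSF {d : ℕ} (u : Fin d → ℝ × (Fin d → ℝ) → ℝ) : Prop :=
  ∀ j k : Fin d, 2 * (((k : ℕ) + 1 + 1) / 2) < (j : ℕ) + 1 → ∀ p, pdx j (u k) p = 0

namespace RSFAux

variable {d : ℕ}

/-- Directional derivative. -/
noncomputable def pdv (v : ℝ × (Fin d → ℝ)) (f : ℝ × (Fin d → ℝ) → ℝ)
    (p : ℝ × (Fin d → ℝ)) : ℝ :=
  fderiv ℝ f p v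

theorem pdt_eq_pdv (f : ℝ × (Fin d → ℝ) → ℝ) : pdt f = pdv (1, 0) f := rfl

theorem pdx_eq_pdv (j : Fin d) (f : ℝ × (Fin d → ℝ) → ℝ) :
    pdx j f = pdv (0, Pi.single j 1) f := rfl

/-- Smoothness abbreviation. -/
def Sm (f : ℝ × (Fin d → ℝ) → ℝ) : Prop := ContDiff ℝ (⊤ : ℕ∞) f

theorem Sm.diffAt {f : ℝ × (Fin d → ℝ) → ℝ} (hf : Sm f) (p : ℝ × (Fin d → ℝ)) :
    DifferentiableAt ℝ f p :=
  (hf.differentiable (by simp)).differentiableAt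

theorem Sm.pdv {f : ℝ × (Fin d → ℝ) → ℝ} (hf : Sm f) (v : ℝ × (Fin d → ℝ)) :
    Sm (pdv v f) := by
  have h : ContDiff ℝ (⊤ : ℕ∞) (fderiv ℝ f) := hf.fderiv_right (by simp)
  exact h.clm_apply contDiff_const

theorem Sm.const (c : ℝ) : Sm (fun _ : ℝ × (Fin d → ℝ) => c) := contDiff_const

theorem Sm.add {f g : ℝ × (Fin d → ℝ) → ℝ} (hf : Sm f) (hg : Sm g) :
    Sm (fun x => f x + g x) := ContDiff.add hf hg

theorem Sm.mul {f g : ℝ × (Fin d → ℝ) → ℝ} (hf : Sm f) (hg : Sm g) :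
    Sm (fun x => f x * g x) := ContDiff.mul hf hg

theorem Sm.sub {f g : ℝ × (Fin d → ℝ) → ℝ} (hf : Sm f) (hg : Sm g) :
    Sm (fun x => f x - g x) := ContDiff.sub hf hg

theorem Sm.cmul {f : ℝ × (Fin d → ℝ) → ℝ} (hf : Sm f) (c : ℝ) :
    Sm (fun x => c * f x) := ContDiff.mul contDiff_const hf

theorem Sm.sum {ι : Type*} (s : Finset ι) (f : ι → ℝ × (Fin d → ℝ) → ℝ)
    (hf : ∀ i ∈ s, Sm (f i)) : Sm (fun x => ∑ i ∈ s, f i x) :=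
  ContDiff.sum hf

theorem pdv_add {f g : ℝ × (Fin d → ℝ) → ℝ} {p : ℝ × (Fin d → ℝ)} (v : ℝ × (Fin d → ℝ))
    (hf : DifferentiableAt ℝ f p) (hg : DifferentiableAt ℝ g p) :
    pdv v (fun x => f x + g x) p = pdv v f p + pdv v g p := by
  unfold pdv
  rw [fderiv_fun_add hf hg]; rfl

theorem pdv_mul {f g : ℝ × (Fin d → ℝ) → ℝ} {p : ℝ × (Fin d → ℝ)} (v : ℝ × (Fin d → ℝ))
    (hf : DifferentiableAt ℝ f p) (hg : DifferentiableAt ℝ g p) :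
    pdv v (fun x => f x * g x) p = pdv v f p * g p + f p * pdv v g p := by
  unfold pdv
  rw [fderiv_fun_mul hf hg]
  simp [smul_eq_mul]
  ring

theorem pdv_const (v : ℝ × (Fin d → ℝ)) (c : ℝ) (p : ℝ × (Fin d → ℝ)) :
    pdv v (fun _ => c) p = 0 := by
  unfold pdv
  rw [fderiv_fun_const]; rfl

theorem pdv_neg {f : ℝ × (Fin d → ℝ) → ℝ} {p : ℝ × (Fin d → ℝ)} (v : ℝ × (Fin d → ℝ)) :
    pdv v (fun x => -(f x)) p = -(pdv v f p) := by
  unfold pdv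
  rw [fderiv_fun_neg]; rfl

theorem pdv_cmul {f : ℝ × (Fin d → ℝ) → ℝ} {p : ℝ × (Fin d → ℝ)} (v : ℝ × (Fin d → ℝ))
    (c : ℝ) (hf : DifferentiableAt ℝ f p) :
    pdv v (fun x => c * f x) p = c * pdv v f p := by
  unfold pdv
  rw [fderiv_const_mul hf]; rfl

theorem pdv_sub {f g : ℝ × (Fin d → ℝ) → ℝ} {p : ℝ × (Fin d → ℝ)} (v : ℝ × (Fin d → ℝ))
    (hf : DifferentiableAt ℝ f p) (hg : DifferentiableAt ℝ g p) :
    pdv v (fun x => f x - g x) p = pdv v f p - pdv v g p := by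
  unfold pdv
  rw [fderiv_fun_sub hf hg]; rfl

theorem pdv_sum {ι : Type*} (s : Finset ι) (f : ι → ℝ × (Fin d → ℝ) → ℝ)
    {p : ℝ × (Fin d → ℝ)} (v : ℝ × (Fin d → ℝ))
    (hf : ∀ i ∈ s, DifferentiableAt ℝ (f i) p) :
    pdv v (fun x => ∑ i ∈ s, f i x) p = ∑ i ∈ s, pdv v (f i) p := by
  unfold pdv
  rw [fderiv_fun_sum hf]
  simp

theorem pdv_comm {f : ℝ × (Fin d → ℝ) → ℝ} (hf : Sm f) (v w : ℝ × (Fin d → ℝ))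
    (p : ℝ × (Fin d → ℝ)) :
    pdv v (pdv w f) p = pdv w (pdv v f) p := by
  have hd : DifferentiableAt ℝ (fderiv ℝ f) p := by
    have h : ContDiff ℝ (⊤ : ℕ∞) (fderiv ℝ f) := hf.fderiv_right (by simp)
    exact (h.differentiable (by simp)).differentiableAt
  have hsymm : IsSymmSndFDerivAt ℝ f p := by
    have h2 : ContDiff ℝ (2 : ℕ) f := hf.of_le (by exact_mod_cast ENat.natCast_le_of_coe_top_le_withTop le_rfl 2)
    exact h2.contDiffAt.isSymmSndFDerivAt (by simp)
  have key : ∀ a : ℝ × (Fin d → ℝ), pdv a f = fun q => fderiv ℝ f q a := fun _ => rfl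
  have expand : ∀ a b : ℝ × (Fin d → ℝ),
      pdv a (pdv b f) p = fderiv ℝ (fderiv ℝ f) p a b := by
    intro a b
    rw [key b]
    unfold pdv
    rw [fderiv_clm_apply hd (differentiableAt_const b)]
    simp
  rw [expand v w, expand w v]
  exact hsymm.eq v w


section Main

variable {d : ℕ} (u : Fin d → ℝ × (Fin d → ℝ) → ℝ) (P : ℝ × (Fin d → ℝ) → ℝ)

theorem sm_g (hu : ∀ k, ContDiff ℝ (⊤ : ℕ∞) (u k)) (j k : Fin d) : Sm (pdx j (u k)) := by
  rw [pdx_eq_pdv]; exact Sm.pdv (hu k) _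

theorem lemA (hu : ∀ k, ContDiff ℝ (⊤ : ℕ∞) (u k)) (hP : ContDiff ℝ (⊤ : ℕ∞) P)
    (heuler : ∀ k p, pdt (u k) p + ∑ j, u j p * pdx j (u k) p = -(pdx k P p))
    (j k : Fin d) (x : ℝ × (Fin d → ℝ)) :
    pdt (pdx j (u k)) x
      + ∑ m, (pdx j (u m) x * pdx m (u k) x + u m x * pdx m (pdx j (u k)) x)
      = -(pdx j (pdx k P) x) := by
  have smu : ∀ m : Fin d, Sm (u m) := hu
  have smg : ∀ a b : Fin d, Sm (pdx a (u b)) := sm_g u hu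
  have smt : ∀ b : Fin d, Sm (pdt (u b)) := by
    intro b; rw [pdt_eq_pdv]; exact Sm.pdv (hu b) _
  have hfun : (fun y => pdt (u k) y + ∑ m, u m y * pdx m (u k) y)
      = (fun y => -(pdx k P y)) := funext (heuler k)
  have hcong := congrFun (congrArg (pdx j) hfun) x
  rw [pdx_eq_pdv] at hcong
  -- expand LHS of hcong
  rw [pdv_add _ ((smt k).diffAt x)
      ((Sm.sum Finset.univ (fun m => fun y => u m y * pdx m (u k) y)
        (fun m _ => Sm.mul (smu m) (smg m k))).diffAt x)] at hcong
  rw [pdv_sum Finset.univ (fun m => fun y => u m y * pdx m (u k) y) _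
      (fun m _ => (Sm.mul (smu m) (smg m k)).diffAt x)] at hcong
  have hterm : ∀ m : Fin d,
      pdv (0, Pi.single j 1) (fun y => u m y * pdx m (u k) y) x
        = pdx j (u m) x * pdx m (u k) x + u m x * pdx m (pdx j (u k)) x := by
    intro m
    rw [pdv_mul _ ((smu m).diffAt x) ((smg m k).diffAt x)]
    rw [show pdv (0, Pi.single j 1) (pdx m (u k)) x = pdx m (pdx j (u k)) x from
      pdv_comm (hu k) _ _ x]
    rfl
  rw [Finset.sum_congr rfl (fun m _ => hterm m)] at hcong
  have hpt : pdv (0, Pi.single j 1) (pdt (u k)) x = pdt (pdx j (u k)) x :=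
    pdv_comm (hu k) _ _ x
  rw [hpt] at hcong
  have hrhs : pdx j (fun y => -(pdx k P y)) x = -(pdx j (pdx k P) x) := by
    rw [pdx_eq_pdv, pdv_neg]
    rfl
  rw [hrhs] at hcong
  exact hcong

theorem g_zero (hRSF : IsRSF u) (j k : Fin d)
    (h : 2 * (((k : ℕ) + 1 + 1) / 2) < (j : ℕ) + 1) :
    pdx j (u k) = fun _ => 0 := funext (hRSF j k h)

theorem pdv_zero_fn (v : ℝ × (Fin d → ℝ)) (x : ℝ × (Fin d → ℝ)) :
    pdv v (fun _ : ℝ × (Fin d → ℝ) => (0 : ℝ)) x = 0 := pdv_const v 0 x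

/-- If the (j,k)-velocity-gradient entry vanishes identically and for every m one of the two
RSF conditions holds, then the mixed pressure derivative vanishes. -/
theorem Qkill (hu : ∀ k, ContDiff ℝ (⊤ : ℕ∞) (u k)) (hP : ContDiff ℝ (⊤ : ℕ∞) P)
    (hRSF : IsRSF u)
    (heuler : ∀ k p, pdt (u k) p + ∑ j, u j p * pdx j (u k) p = -(pdx k P p))
    (j k : Fin d)
    (hjk : 2 * (((k : ℕ) + 1 + 1) / 2) < (j : ℕ) + 1)
    (hprod : ∀ m : Fin d, 2 * (((k : ℕ) + 1 + 1) / 2) < (m : ℕ) + 1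
      ∨ 2 * (((m : ℕ) + 1 + 1) / 2) < (j : ℕ) + 1)
    (x : ℝ × (Fin d → ℝ)) :
    pdx j (pdx k P) x = 0 := by
  have hA := lemA u P hu hP heuler j k x
  have hz : pdx j (u k) = fun _ => 0 := g_zero u hRSF j k hjk
  rw [hz] at hA
  have h1 : pdt (fun _ : ℝ × (Fin d → ℝ) => (0:ℝ)) x = 0 := by
    rw [pdt_eq_pdv]; exact pdv_zero_fn _ _
  rw [h1] at hA
  have h2 : ∀ m : Fin d,
      pdx j (u m) x * pdx m (u k) x + u m x * pdx m (fun _ : ℝ × (Fin d → ℝ) => (0:ℝ)) x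
        = 0 := by
    intro m
    have h3 : pdx m (fun _ : ℝ × (Fin d → ℝ) => (0:ℝ)) x = 0 := by
      rw [pdx_eq_pdv]; exact pdv_zero_fn _ _
    rw [h3, mul_zero, add_zero]
    rcases hprod m with hm | hm
    · rw [hRSF m k hm x, mul_zero]
    · rw [hRSF j m hm x, zero_mul]
  rw [Finset.sum_congr rfl (fun m _ => h2 m), Finset.sum_const_zero] at hA
  linarith

theorem presskill (hu : ∀ k, ContDiff ℝ (⊤ : ℕ∞) (u k)) (hP : ContDiff ℝ (⊤ : ℕ∞) P)
    (hRSF : IsRSF u)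
    (heuler : ∀ k p, pdt (u k) p + ∑ j, u j p * pdx j (u k) p = -(pdx k P p))
    (i : ℕ) (hi : 1 ≤ i) (j k : Fin d)
    (hk : (k : ℕ) + 1 = 2 * i - 1 ∨ (k : ℕ) + 1 = 2 * i)
    (hj : ¬((j : ℕ) + 1 = 2 * i - 1 ∨ (j : ℕ) + 1 = 2 * i))
    (x : ℝ × (Fin d → ℝ)) :
    pdx j (pdx k P) x = 0 := by
  have hcase : 2 * i < (j : ℕ) + 1 ∨ (j : ℕ) + 1 + 1 < 2 * i := by omega
  rcases hcase with hc | hc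
  · exact Qkill u P hu hP hRSF heuler j k (by omega) (fun m => by omega) x
  · have hsymm : pdx j (pdx k P) x = pdx k (pdx j P) x := by
      rw [pdx_eq_pdv, pdx_eq_pdv, pdx_eq_pdv, pdx_eq_pdv, pdv_comm hP]
    rw [hsymm]
    exact Qkill u P hu hP hRSF heuler k j (by omega) (fun m => by omega) x


/-- Indicator coefficient. -/
noncomputable def chi (i : ℕ) (k : Fin d) : ℝ :=
  if (k : ℕ) + 1 = 2 * i - 1 ∨ (k : ℕ) + 1 = 2 * i then 1 else 0

/-- The partial vorticity two-form. -/
noncomputable def Om (i : ℕ) (j k : Fin d) : ℝ × (Fin d → ℝ) → ℝ :=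
  fun x => chi i k * pdx j (u k) x - chi i j * pdx k (u j) x

theorem Om_sm (hu : ∀ k, ContDiff ℝ (⊤ : ℕ∞) (u k)) (i : ℕ) (j k : Fin d) :
    Sm (Om u i j k) :=
  Sm.sub (Sm.cmul (sm_g u hu j k) _) (Sm.cmul (sm_g u hu k j) _)

theorem Om_pdv (hu : ∀ k, ContDiff ℝ (⊤ : ℕ∞) (u k)) (i : ℕ) (j k : Fin d)
    (v : ℝ × (Fin d → ℝ)) (x : ℝ × (Fin d → ℝ)) :
    pdv v (Om u i j k) x
      = chi i k * pdv v (pdx j (u k)) x - chi i j * pdv v (pdx k (u j)) x := by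
  unfold Om
  rw [pdv_sub _ ((Sm.cmul (sm_g u hu j k) _).diffAt x) ((Sm.cmul (sm_g u hu k j) _).diffAt x),
    pdv_cmul _ _ ((sm_g u hu j k).diffAt x), pdv_cmul _ _ ((sm_g u hu k j).diffAt x)]

theorem lemD (hu : ∀ k, ContDiff ℝ (⊤ : ℕ∞) (u k)) (hP : ContDiff ℝ (⊤ : ℕ∞) P)
    (hRSF : IsRSF u)
    (heuler : ∀ k p, pdt (u k) p + ∑ j, u j p * pdx j (u k) p = -(pdx k P p))
    (i : ℕ) (hi : 1 ≤ i) (j k : Fin d) (x : ℝ × (Fin d → ℝ)) :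
    pdt (Om u i j k) x
      + ∑ m, (u m x * pdx m (Om u i j k) x
          + Om u i m k x * pdx j (u m) x + Om u i j m x * pdx k (u m) x) = 0 := by
  have hDt : pdt (Om u i j k) x
      = chi i k * pdt (pdx j (u k)) x - chi i j * pdt (pdx k (u j)) x :=
    Om_pdv u hu i j k _ x
  have hDx : ∀ m : Fin d, pdx m (Om u i j k) x
      = chi i k * pdx m (pdx j (u k)) x - chi i j * pdx m (pdx k (u j)) x :=
    fun m => Om_pdv u hu i j k _ x
  have e1 : pdt (pdx j (u k)) x
      = -(pdx j (pdx k P) x)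
        - ∑ m, (pdx j (u m) x * pdx m (u k) x + u m x * pdx m (pdx j (u k)) x) := by
    have := lemA u P hu hP heuler j k x; linarith
  have e2 : pdt (pdx k (u j)) x
      = -(pdx k (pdx j P) x)
        - ∑ m, (pdx k (u m) x * pdx m (u j) x + u m x * pdx m (pdx k (u j)) x) := by
    have := lemA u P hu hP heuler k j x; linarith
  have hsum : ∑ m, (u m x * pdx m (Om u i j k) x
          + Om u i m k x * pdx j (u m) x + Om u i j m x * pdx k (u m) x)
      = chi i k * (∑ m, (pdx j (u m) x * pdx m (u k) x + u m x * pdx m (pdx j (u k)) x))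
        - chi i j * (∑ m, (pdx k (u m) x * pdx m (u j) x + u m x * pdx m (pdx k (u j)) x)) := by
    rw [Finset.mul_sum, Finset.mul_sum, ← Finset.sum_sub_distrib]
    refine Finset.sum_congr rfl (fun m _ => ?_)
    rw [hDx m]
    simp only [Om]
    ring
  have hPsym : pdx k (pdx j P) x = pdx j (pdx k P) x := pdv_comm hP _ _ x
  have hzero : chi i j * pdx j (pdx k P) x = chi i k * pdx j (pdx k P) x := by
    by_cases hjc : (j : ℕ) + 1 = 2 * i - 1 ∨ (j : ℕ) + 1 = 2 * i
    · by_cases hkc : (k : ℕ) + 1 = 2 * i - 1 ∨ (k : ℕ) + 1 = 2 * i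
      · rw [chi, chi, if_pos hjc, if_pos hkc]
      · have h0 : pdx k (pdx j P) x = 0 :=
          presskill u P hu hP hRSF heuler i hi k j hjc hkc x
        rw [hPsym] at h0
        rw [h0, mul_zero, mul_zero]
    · by_cases hkc : (k : ℕ) + 1 = 2 * i - 1 ∨ (k : ℕ) + 1 = 2 * i
      · have h0 : pdx j (pdx k P) x = 0 :=
          presskill u P hu hP hRSF heuler i hi j k hkc hjc x
        rw [h0, mul_zero, mul_zero]
      · rw [chi, chi, if_neg hjc, if_neg hkc]
  rw [hDt, hsum, e1, e2, hPsym]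
  ring_nf
  nlinarith [hzero, hPsym]


theorem lemPartA (hu : ∀ k, ContDiff ℝ (⊤ : ℕ∞) (u k)) (hP : ContDiff ℝ (⊤ : ℕ∞) P)
    (hRSF : IsRSF u)
    (heuler : ∀ k p, pdt (u k) p + ∑ j, u j p * pdx j (u k) p = -(pdx k P p))
    (S : Finset ℕ) (hS : ∀ i ∈ S, 1 ≤ i) (c : ℕ → ℝ)
    (W : Fin d → Fin d → ℝ × (Fin d → ℝ) → ℝ)
    (hW : ∀ j k, W j k = fun x => ∑ i ∈ S, c i * Om u i j k x)
    (j k : Fin d) (x : ℝ × (Fin d → ℝ)) :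
    pdt (W j k) x
      + ∑ m, (u m x * pdx m (W j k) x + W m k x * pdx j (u m) x + W j m x * pdx k (u m) x)
      = 0 := by
  have smOm : ∀ (i : ℕ) (a b : Fin d), Sm (Om u i a b) := fun i a b => Om_sm u hu i a b
  have hWpdv : ∀ (a b : Fin d) (v : ℝ × (Fin d → ℝ)),
      pdv v (W a b) x = ∑ i ∈ S, c i * pdv v (Om u i a b) x := by
    intro a b v
    rw [hW a b, pdv_sum S (fun i => fun y => c i * Om u i a b y) v
      (fun i _ => (Sm.cmul (smOm i a b) (c i)).diffAt x)]
    exact Finset.sum_congr rfl fun i _ => pdv_cmul v (c i) ((smOm i a b).diffAt x)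
  have hpdtW : pdt (W j k) x = ∑ i ∈ S, c i * pdt (Om u i j k) x := hWpdv j k (1, 0)
  have hterm : ∀ m : Fin d,
      u m x * pdx m (W j k) x + W m k x * pdx j (u m) x + W j m x * pdx k (u m) x
        = ∑ i ∈ S, c i * (u m x * pdx m (Om u i j k) x
            + Om u i m k x * pdx j (u m) x + Om u i j m x * pdx k (u m) x) := by
    intro m
    have h1 : pdx m (W j k) x = ∑ i ∈ S, c i * pdx m (Om u i j k) x :=
      hWpdv j k (0, Pi.single m 1)
    have h2 : W m k x = ∑ i ∈ S, c i * Om u i m k x := congrFun (hW m k) x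
    have h3 : W j m x = ∑ i ∈ S, c i * Om u i j m x := congrFun (hW j m) x
    rw [h1, h2, h3, Finset.mul_sum, Finset.sum_mul, Finset.sum_mul,
      ← Finset.sum_add_distrib, ← Finset.sum_add_distrib]
    exact Finset.sum_congr rfl fun i _ => by ring
  rw [hpdtW, Finset.sum_congr rfl (fun m _ => hterm m), Finset.sum_comm,
    ← Finset.sum_add_distrib]
  refine Finset.sum_eq_zero fun i hi => ?_
  rw [← Finset.mul_sum, ← mul_add, lemD u P hu hP hRSF heuler i (hS i hi) j k x, mul_zero]


theorem hswap1 {α β : Type*} (s : Finset α) (t : Finset β) (w : α → ℝ) (c : ℝ)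
    (f : β → α → ℝ) :
    ∑ a ∈ s, w a * (c * ∑ b ∈ t, f b a) = c * ∑ b ∈ t, ∑ a ∈ s, w a * f b a := by
  have h1 : ∀ a ∈ s, w a * (c * ∑ b ∈ t, f b a) = ∑ b ∈ t, c * (w a * f b a) := by
    intro a _
    rw [Finset.mul_sum, Finset.mul_sum]
    exact Finset.sum_congr rfl fun b _ => by ring
  rw [Finset.sum_congr rfl h1, Finset.sum_comm, Finset.mul_sum]
  exact Finset.sum_congr rfl fun b _ => by rw [Finset.mul_sum]

theorem hswap2 {α β : Type*} (s : Finset α) (t : Finset β) (c : ℝ)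
    (f0 f1 f2 f3 : β → α → ℝ) (g0 g1 g2 g3 : α → ℝ) :
    ∑ a ∈ s, ((c * ∑ b ∈ t, f0 b a) * g0 a + (c * ∑ b ∈ t, f1 b a) * g1 a
        + (c * ∑ b ∈ t, f2 b a) * g2 a + (c * ∑ b ∈ t, f3 b a) * g3 a)
      = c * ∑ b ∈ t, ∑ a ∈ s, (f0 b a * g0 a + f1 b a * g1 a + f2 b a * g2 a + f3 b a * g3 a) := by
  have h1 : ∀ a ∈ s, (c * ∑ b ∈ t, f0 b a) * g0 a + (c * ∑ b ∈ t, f1 b a) * g1 a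
        + (c * ∑ b ∈ t, f2 b a) * g2 a + (c * ∑ b ∈ t, f3 b a) * g3 a
      = ∑ b ∈ t, c * (f0 b a * g0 a + f1 b a * g1 a + f2 b a * g2 a + f3 b a * g3 a) := by
    intro a _
    rw [mul_assoc, mul_assoc, mul_assoc, mul_assoc, Finset.sum_mul, Finset.sum_mul,
      Finset.sum_mul, Finset.sum_mul, Finset.mul_sum, Finset.mul_sum, Finset.mul_sum,
      Finset.mul_sum, ← Finset.sum_add_distrib, ← Finset.sum_add_distrib,
      ← Finset.sum_add_distrib]
    exact Finset.sum_congr rfl fun b _ => by ring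
  rw [Finset.sum_congr rfl h1, Finset.sum_comm, Finset.mul_sum]
  exact Finset.sum_congr rfl fun b _ => by rw [Finset.mul_sum]


theorem lemPartB (hu : ∀ k, ContDiff ℝ (⊤ : ℕ∞) (u k)) (hP : ContDiff ℝ (⊤ : ℕ∞) P)
    (hRSF : IsRSF u)
    (heuler : ∀ k p, pdt (u k) p + ∑ j, u j p * pdx j (u k) p = -(pdx k P p))
    (i i' : ℕ) (hi : 1 ≤ i) (hi' : 1 ≤ i')
    (W : Fin d → Fin d → Fin d → Fin d → ℝ × (Fin d → ℝ) → ℝ)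
    (hW : ∀ (j₁ j₂ j₃ j₄ : Fin d) (x : ℝ × (Fin d → ℝ)),
      W j₁ j₂ j₃ j₄ x = (1 / 4 : ℝ)
        * ∑ σ : Equiv.Perm (Fin 4), ((Equiv.Perm.sign σ : ℤ) : ℝ)
            * (Om u i (![j₁, j₂, j₃, j₄] (σ 0)) (![j₁, j₂, j₃, j₄] (σ 1)) x
               * Om u i' (![j₁, j₂, j₃, j₄] (σ 2)) (![j₁, j₂, j₃, j₄] (σ 3)) x))
    (j₁ j₂ j₃ j₄ : Fin d) (x : ℝ × (Fin d → ℝ)) :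
    pdt (W j₁ j₂ j₃ j₄) x + ∑ m, u m x * pdx m (W j₁ j₂ j₃ j₄) x
      + ∑ m, (W m j₂ j₃ j₄ x * pdx j₁ (u m) x + W j₁ m j₃ j₄ x * pdx j₂ (u m) x
          + W j₁ j₂ m j₄ x * pdx j₃ (u m) x + W j₁ j₂ j₃ m x * pdx j₄ (u m) x)
      = 0 := by
  -- abbreviation for the transported-derivative identity
  have hLD : ∀ (ii : ℕ), 1 ≤ ii → ∀ a b : Fin d,
      pdt (Om u ii a b) x + ∑ m, u m x * pdx m (Om u ii a b) x
        = -(∑ m, (Om u ii m b x * pdx a (u m) x + Om u ii a m x * pdx b (u m) x)) := by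
    intro ii hii a b
    have h := lemD u P hu hP hRSF heuler ii hii a b x
    rw [show (∑ m, (u m x * pdx m (Om u ii a b) x
          + Om u ii m b x * pdx a (u m) x + Om u ii a m x * pdx b (u m) x))
        = ∑ m, (u m x * pdx m (Om u ii a b) x)
          + ∑ m, (Om u ii m b x * pdx a (u m) x + Om u ii a m x * pdx b (u m) x) from by
      rw [← Finset.sum_add_distrib]
      exact Finset.sum_congr rfl fun m _ => by ring] at h
    linarith
  have hupd0 : ∀ m : Fin d, (![m, j₂, j₃, j₄] : Fin 4 → Fin d)
      = Function.update (![j₁, j₂, j₃, j₄]) 0 m := by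
    intro m; funext q; fin_cases q <;> simp [Function.update]
  have hupd1 : ∀ m : Fin d, (![j₁, m, j₃, j₄] : Fin 4 → Fin d)
      = Function.update (![j₁, j₂, j₃, j₄]) 1 m := by
    intro m; funext q; fin_cases q <;> simp [Function.update]
  have hupd2 : ∀ m : Fin d, (![j₁, j₂, m, j₄] : Fin 4 → Fin d)
      = Function.update (![j₁, j₂, j₃, j₄]) 2 m := by
    intro m; funext q; fin_cases q <;> simp [Function.update]
  have hupd3 : ∀ m : Fin d, (![j₁, j₂, j₃, m] : Fin 4 → Fin d)
      = Function.update (![j₁, j₂, j₃, j₄]) 3 m := by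
    intro m; funext q; fin_cases q <;> simp [Function.update]
  have hreindex : ∀ (m : Fin d) (σ : Equiv.Perm (Fin 4)),
      Om u i (![m, j₂, j₃, j₄] (σ 0)) (![m, j₂, j₃, j₄] (σ 1)) x
          * Om u i' (![m, j₂, j₃, j₄] (σ 2)) (![m, j₂, j₃, j₄] (σ 3)) x * pdx j₁ (u m) x
        + Om u i (![j₁, m, j₃, j₄] (σ 0)) (![j₁, m, j₃, j₄] (σ 1)) x
          * Om u i' (![j₁, m, j₃, j₄] (σ 2)) (![j₁, m, j₃, j₄] (σ 3)) x * pdx j₂ (u m) x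
        + Om u i (![j₁, j₂, m, j₄] (σ 0)) (![j₁, j₂, m, j₄] (σ 1)) x
          * Om u i' (![j₁, j₂, m, j₄] (σ 2)) (![j₁, j₂, m, j₄] (σ 3)) x * pdx j₃ (u m) x
        + Om u i (![j₁, j₂, j₃, m] (σ 0)) (![j₁, j₂, j₃, m] (σ 1)) x
          * Om u i' (![j₁, j₂, j₃, m] (σ 2)) (![j₁, j₂, j₃, m] (σ 3)) x * pdx j₄ (u m) x
      = (Om u i m (![j₁, j₂, j₃, j₄] (σ 1)) x * pdx (![j₁, j₂, j₃, j₄] (σ 0)) (u m) x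
           + Om u i (![j₁, j₂, j₃, j₄] (σ 0)) m x * pdx (![j₁, j₂, j₃, j₄] (σ 1)) (u m) x)
          * Om u i' (![j₁, j₂, j₃, j₄] (σ 2)) (![j₁, j₂, j₃, j₄] (σ 3)) x
        + Om u i (![j₁, j₂, j₃, j₄] (σ 0)) (![j₁, j₂, j₃, j₄] (σ 1)) x
          * (Om u i' m (![j₁, j₂, j₃, j₄] (σ 3)) x * pdx (![j₁, j₂, j₃, j₄] (σ 2)) (u m) x
             + Om u i' (![j₁, j₂, j₃, j₄] (σ 2)) m x * pdx (![j₁, j₂, j₃, j₄] (σ 3)) (u m) x) := by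
    intro m σ
    have hne : ∀ s t : Fin 4, s ≠ t → σ s ≠ σ t := fun s t h hc => h (σ.injective hc)
    have e := (Equiv.sum_comp σ (fun t =>
      Om u i (Function.update (![j₁, j₂, j₃, j₄]) t m (σ 0))
          (Function.update (![j₁, j₂, j₃, j₄]) t m (σ 1)) x
        * Om u i' (Function.update (![j₁, j₂, j₃, j₄]) t m (σ 2))
          (Function.update (![j₁, j₂, j₃, j₄]) t m (σ 3)) x
        * pdx ((![j₁, j₂, j₃, j₄]) t) (u m) x)).symm
    simp only [Fin.sum_univ_four] at e
    rw [← hupd0 m, ← hupd1 m, ← hupd2 m, ← hupd3 m] at e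
    simp only [Matrix.cons_val_zero, Matrix.cons_val_one, Matrix.head_cons,
      Matrix.cons_val_two, Matrix.tail_cons, Matrix.cons_val_three,
      Function.update_self,
      Function.update_of_ne (hne 0 1 (by decide)), Function.update_of_ne (hne 0 2 (by decide)),
      Function.update_of_ne (hne 0 3 (by decide)), Function.update_of_ne (hne 1 0 (by decide)),
      Function.update_of_ne (hne 1 2 (by decide)), Function.update_of_ne (hne 1 3 (by decide)),
      Function.update_of_ne (hne 2 0 (by decide)), Function.update_of_ne (hne 2 1 (by decide)),
      Function.update_of_ne (hne 2 3 (by decide)), Function.update_of_ne (hne 3 0 (by decide)),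
      Function.update_of_ne (hne 3 1 (by decide)), Function.update_of_ne (hne 3 2 (by decide))] at e
    linear_combination e
  have smAB : ∀ (σ : Equiv.Perm (Fin 4)) (a b c e : Fin d),
      Sm (fun y => ((Equiv.Perm.sign σ : ℤ) : ℝ)
        * (Om u i (![a, b, c, e] (σ 0)) (![a, b, c, e] (σ 1)) y
           * Om u i' (![a, b, c, e] (σ 2)) (![a, b, c, e] (σ 3)) y)) :=
    fun σ a b c e => Sm.cmul (Sm.mul (Om_sm u hu i _ _) (Om_sm u hu i' _ _)) _
  have hWpdv : ∀ (a b c e : Fin d) (v' : ℝ × (Fin d → ℝ)),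
      pdv v' (W a b c e) x = (1 / 4 : ℝ) * ∑ σ : Equiv.Perm (Fin 4),
        ((Equiv.Perm.sign σ : ℤ) : ℝ)
          * (pdv v' (Om u i (![a, b, c, e] (σ 0)) (![a, b, c, e] (σ 1))) x
               * Om u i' (![a, b, c, e] (σ 2)) (![a, b, c, e] (σ 3)) x
             + Om u i (![a, b, c, e] (σ 0)) (![a, b, c, e] (σ 1)) x
               * pdv v' (Om u i' (![a, b, c, e] (σ 2)) (![a, b, c, e] (σ 3))) x) := by
    intro a b c e v'
    rw [show W a b c e = fun y => (1 / 4 : ℝ) * ∑ σ : Equiv.Perm (Fin 4),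
        ((Equiv.Perm.sign σ : ℤ) : ℝ)
          * (Om u i (![a, b, c, e] (σ 0)) (![a, b, c, e] (σ 1)) y
             * Om u i' (![a, b, c, e] (σ 2)) (![a, b, c, e] (σ 3)) y) from funext (hW a b c e)]
    rw [pdv_cmul v' (1 / 4 : ℝ)
      ((Sm.sum Finset.univ _ (fun σ _ => smAB σ a b c e)).diffAt x)]
    congr 1
    rw [pdv_sum Finset.univ (fun σ => fun y => ((Equiv.Perm.sign σ : ℤ) : ℝ)
        * (Om u i (![a, b, c, e] (σ 0)) (![a, b, c, e] (σ 1)) y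
           * Om u i' (![a, b, c, e] (σ 2)) (![a, b, c, e] (σ 3)) y)) v'
      (fun σ _ => (smAB σ a b c e).diffAt x)]
    refine Finset.sum_congr rfl fun σ _ => ?_
    rw [pdv_cmul v' _ ((Sm.mul (Om_sm u hu i _ _) (Om_sm u hu i' _ _)).diffAt x)]
    congr 1
    exact pdv_mul v' ((Om_sm u hu i _ _).diffAt x) ((Om_sm u hu i' _ _).diffAt x)
  have c1 : pdt (W j₁ j₂ j₃ j₄) x = (1 / 4 : ℝ) * ∑ σ : Equiv.Perm (Fin 4),
      ((Equiv.Perm.sign σ : ℤ) : ℝ)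
        * (pdt (Om u i (![j₁, j₂, j₃, j₄] (σ 0)) (![j₁, j₂, j₃, j₄] (σ 1))) x
             * Om u i' (![j₁, j₂, j₃, j₄] (σ 2)) (![j₁, j₂, j₃, j₄] (σ 3)) x
           + Om u i (![j₁, j₂, j₃, j₄] (σ 0)) (![j₁, j₂, j₃, j₄] (σ 1)) x
             * pdt (Om u i' (![j₁, j₂, j₃, j₄] (σ 2)) (![j₁, j₂, j₃, j₄] (σ 3))) x) :=
    hWpdv j₁ j₂ j₃ j₄ (1, 0)
  have c2 : ∀ m : Fin d, pdx m (W j₁ j₂ j₃ j₄) x = (1 / 4 : ℝ) * ∑ σ : Equiv.Perm (Fin 4),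
      ((Equiv.Perm.sign σ : ℤ) : ℝ)
        * (pdx m (Om u i (![j₁, j₂, j₃, j₄] (σ 0)) (![j₁, j₂, j₃, j₄] (σ 1))) x
             * Om u i' (![j₁, j₂, j₃, j₄] (σ 2)) (![j₁, j₂, j₃, j₄] (σ 3)) x
           + Om u i (![j₁, j₂, j₃, j₄] (σ 0)) (![j₁, j₂, j₃, j₄] (σ 1)) x
             * pdx m (Om u i' (![j₁, j₂, j₃, j₄] (σ 2)) (![j₁, j₂, j₃, j₄] (σ 3))) x) :=
    fun m => hWpdv j₁ j₂ j₃ j₄ (0, Pi.single m 1)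
  rw [c1]
  simp only [c2]
  simp only [hW]
  rw [hswap1 Finset.univ Finset.univ (fun m => u m x) (1 / 4 : ℝ)
    (fun σ m => ((Equiv.Perm.sign σ : ℤ) : ℝ)
      * (pdx m (Om u i (![j₁, j₂, j₃, j₄] (σ 0)) (![j₁, j₂, j₃, j₄] (σ 1))) x
           * Om u i' (![j₁, j₂, j₃, j₄] (σ 2)) (![j₁, j₂, j₃, j₄] (σ 3)) x
         + Om u i (![j₁, j₂, j₃, j₄] (σ 0)) (![j₁, j₂, j₃, j₄] (σ 1)) x
           * pdx m (Om u i' (![j₁, j₂, j₃, j₄] (σ 2)) (![j₁, j₂, j₃, j₄] (σ 3))) x))]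
  rw [hswap2 Finset.univ Finset.univ (1 / 4 : ℝ)
    (fun σ m => ((Equiv.Perm.sign σ : ℤ) : ℝ)
      * (Om u i (![m, j₂, j₃, j₄] (σ 0)) (![m, j₂, j₃, j₄] (σ 1)) x
         * Om u i' (![m, j₂, j₃, j₄] (σ 2)) (![m, j₂, j₃, j₄] (σ 3)) x))
    (fun σ m => ((Equiv.Perm.sign σ : ℤ) : ℝ)
      * (Om u i (![j₁, m, j₃, j₄] (σ 0)) (![j₁, m, j₃, j₄] (σ 1)) x
         * Om u i' (![j₁, m, j₃, j₄] (σ 2)) (![j₁, m, j₃, j₄] (σ 3)) x))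
    (fun σ m => ((Equiv.Perm.sign σ : ℤ) : ℝ)
      * (Om u i (![j₁, j₂, m, j₄] (σ 0)) (![j₁, j₂, m, j₄] (σ 1)) x
         * Om u i' (![j₁, j₂, m, j₄] (σ 2)) (![j₁, j₂, m, j₄] (σ 3)) x))
    (fun σ m => ((Equiv.Perm.sign σ : ℤ) : ℝ)
      * (Om u i (![j₁, j₂, j₃, m] (σ 0)) (![j₁, j₂, j₃, m] (σ 1)) x
         * Om u i' (![j₁, j₂, j₃, m] (σ 2)) (![j₁, j₂, j₃, m] (σ 3)) x))
    (fun m => pdx j₁ (u m) x) (fun m => pdx j₂ (u m) x)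
    (fun m => pdx j₃ (u m) x) (fun m => pdx j₄ (u m) x)]
  rw [← mul_add, ← mul_add, ← Finset.sum_add_distrib, ← Finset.sum_add_distrib]
  refine mul_eq_zero_of_right _ (Finset.sum_eq_zero fun σ _ => ?_)
  have pa := hLD i hi (![j₁, j₂, j₃, j₄] (σ 0)) (![j₁, j₂, j₃, j₄] (σ 1))
  have pb := hLD i' hi' (![j₁, j₂, j₃, j₄] (σ 2)) (![j₁, j₂, j₃, j₄] (σ 3))
  have h2σ : ∑ m, u m x * (((Equiv.Perm.sign σ : ℤ) : ℝ)
      * (pdx m (Om u i (![j₁, j₂, j₃, j₄] (σ 0)) (![j₁, j₂, j₃, j₄] (σ 1))) x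
           * Om u i' (![j₁, j₂, j₃, j₄] (σ 2)) (![j₁, j₂, j₃, j₄] (σ 3)) x
         + Om u i (![j₁, j₂, j₃, j₄] (σ 0)) (![j₁, j₂, j₃, j₄] (σ 1)) x
           * pdx m (Om u i' (![j₁, j₂, j₃, j₄] (σ 2)) (![j₁, j₂, j₃, j₄] (σ 3))) x))
      = ((Equiv.Perm.sign σ : ℤ) : ℝ)
        * ((∑ m, u m x * pdx m (Om u i (![j₁, j₂, j₃, j₄] (σ 0)) (![j₁, j₂, j₃, j₄] (σ 1))) x)
             * Om u i' (![j₁, j₂, j₃, j₄] (σ 2)) (![j₁, j₂, j₃, j₄] (σ 3)) x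
           + Om u i (![j₁, j₂, j₃, j₄] (σ 0)) (![j₁, j₂, j₃, j₄] (σ 1)) x
             * (∑ m, u m x * pdx m (Om u i' (![j₁, j₂, j₃, j₄] (σ 2)) (![j₁, j₂, j₃, j₄] (σ 3))) x)) := by
    rw [Finset.sum_congr rfl (fun m (_ : m ∈ Finset.univ) =>
      show u m x * (((Equiv.Perm.sign σ : ℤ) : ℝ)
          * (pdx m (Om u i (![j₁, j₂, j₃, j₄] (σ 0)) (![j₁, j₂, j₃, j₄] (σ 1))) x
               * Om u i' (![j₁, j₂, j₃, j₄] (σ 2)) (![j₁, j₂, j₃, j₄] (σ 3)) x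
             + Om u i (![j₁, j₂, j₃, j₄] (σ 0)) (![j₁, j₂, j₃, j₄] (σ 1)) x
               * pdx m (Om u i' (![j₁, j₂, j₃, j₄] (σ 2)) (![j₁, j₂, j₃, j₄] (σ 3))) x))
        = ((Equiv.Perm.sign σ : ℤ) : ℝ)
            * ((u m x * pdx m (Om u i (![j₁, j₂, j₃, j₄] (σ 0)) (![j₁, j₂, j₃, j₄] (σ 1))) x)
                * Om u i' (![j₁, j₂, j₃, j₄] (σ 2)) (![j₁, j₂, j₃, j₄] (σ 3)) x)
          + ((Equiv.Perm.sign σ : ℤ) : ℝ)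
            * (Om u i (![j₁, j₂, j₃, j₄] (σ 0)) (![j₁, j₂, j₃, j₄] (σ 1)) x
                * (u m x * pdx m (Om u i' (![j₁, j₂, j₃, j₄] (σ 2)) (![j₁, j₂, j₃, j₄] (σ 3))) x))
        from by ring)]
    rw [Finset.sum_add_distrib, ← Finset.mul_sum, ← Finset.mul_sum, ← Finset.sum_mul,
      ← Finset.mul_sum, ← mul_add]
  have h3σ : ∑ m, (((Equiv.Perm.sign σ : ℤ) : ℝ)
        * (Om u i (![m, j₂, j₃, j₄] (σ 0)) (![m, j₂, j₃, j₄] (σ 1)) x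
           * Om u i' (![m, j₂, j₃, j₄] (σ 2)) (![m, j₂, j₃, j₄] (σ 3)) x) * pdx j₁ (u m) x
      + ((Equiv.Perm.sign σ : ℤ) : ℝ)
        * (Om u i (![j₁, m, j₃, j₄] (σ 0)) (![j₁, m, j₃, j₄] (σ 1)) x
           * Om u i' (![j₁, m, j₃, j₄] (σ 2)) (![j₁, m, j₃, j₄] (σ 3)) x) * pdx j₂ (u m) x
      + ((Equiv.Perm.sign σ : ℤ) : ℝ)
        * (Om u i (![j₁, j₂, m, j₄] (σ 0)) (![j₁, j₂, m, j₄] (σ 1)) x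
           * Om u i' (![j₁, j₂, m, j₄] (σ 2)) (![j₁, j₂, m, j₄] (σ 3)) x) * pdx j₃ (u m) x
      + ((Equiv.Perm.sign σ : ℤ) : ℝ)
        * (Om u i (![j₁, j₂, j₃, m] (σ 0)) (![j₁, j₂, j₃, m] (σ 1)) x
           * Om u i' (![j₁, j₂, j₃, m] (σ 2)) (![j₁, j₂, j₃, m] (σ 3)) x) * pdx j₄ (u m) x)
      = ((Equiv.Perm.sign σ : ℤ) : ℝ)
        * ((∑ m, (Om u i m (![j₁, j₂, j₃, j₄] (σ 1)) x * pdx (![j₁, j₂, j₃, j₄] (σ 0)) (u m) x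
              + Om u i (![j₁, j₂, j₃, j₄] (σ 0)) m x * pdx (![j₁, j₂, j₃, j₄] (σ 1)) (u m) x))
             * Om u i' (![j₁, j₂, j₃, j₄] (σ 2)) (![j₁, j₂, j₃, j₄] (σ 3)) x
           + Om u i (![j₁, j₂, j₃, j₄] (σ 0)) (![j₁, j₂, j₃, j₄] (σ 1)) x
             * (∑ m, (Om u i' m (![j₁, j₂, j₃, j₄] (σ 3)) x * pdx (![j₁, j₂, j₃, j₄] (σ 2)) (u m) x
                + Om u i' (![j₁, j₂, j₃, j₄] (σ 2)) m x * pdx (![j₁, j₂, j₃, j₄] (σ 3)) (u m) x))) := by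
    rw [Finset.sum_congr rfl (fun m (_ : m ∈ Finset.univ) =>
      show ((Equiv.Perm.sign σ : ℤ) : ℝ)
        * (Om u i (![m, j₂, j₃, j₄] (σ 0)) (![m, j₂, j₃, j₄] (σ 1)) x
           * Om u i' (![m, j₂, j₃, j₄] (σ 2)) (![m, j₂, j₃, j₄] (σ 3)) x) * pdx j₁ (u m) x
      + ((Equiv.Perm.sign σ : ℤ) : ℝ)
        * (Om u i (![j₁, m, j₃, j₄] (σ 0)) (![j₁, m, j₃, j₄] (σ 1)) x
           * Om u i' (![j₁, m, j₃, j₄] (σ 2)) (![j₁, m, j₃, j₄] (σ 3)) x) * pdx j₂ (u m) x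
      + ((Equiv.Perm.sign σ : ℤ) : ℝ)
        * (Om u i (![j₁, j₂, m, j₄] (σ 0)) (![j₁, j₂, m, j₄] (σ 1)) x
           * Om u i' (![j₁, j₂, m, j₄] (σ 2)) (![j₁, j₂, m, j₄] (σ 3)) x) * pdx j₃ (u m) x
      + ((Equiv.Perm.sign σ : ℤ) : ℝ)
        * (Om u i (![j₁, j₂, j₃, m] (σ 0)) (![j₁, j₂, j₃, m] (σ 1)) x
           * Om u i' (![j₁, j₂, j₃, m] (σ 2)) (![j₁, j₂, j₃, m] (σ 3)) x) * pdx j₄ (u m) x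
      = ((Equiv.Perm.sign σ : ℤ) : ℝ)
          * ((Om u i m (![j₁, j₂, j₃, j₄] (σ 1)) x * pdx (![j₁, j₂, j₃, j₄] (σ 0)) (u m) x
              + Om u i (![j₁, j₂, j₃, j₄] (σ 0)) m x * pdx (![j₁, j₂, j₃, j₄] (σ 1)) (u m) x)
            * Om u i' (![j₁, j₂, j₃, j₄] (σ 2)) (![j₁, j₂, j₃, j₄] (σ 3)) x)
        + ((Equiv.Perm.sign σ : ℤ) : ℝ)
          * (Om u i (![j₁, j₂, j₃, j₄] (σ 0)) (![j₁, j₂, j₃, j₄] (σ 1)) x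
            * (Om u i' m (![j₁, j₂, j₃, j₄] (σ 3)) x * pdx (![j₁, j₂, j₃, j₄] (σ 2)) (u m) x
               + Om u i' (![j₁, j₂, j₃, j₄] (σ 2)) m x * pdx (![j₁, j₂, j₃, j₄] (σ 3)) (u m) x))
        from by linear_combination ((Equiv.Perm.sign σ : ℤ) : ℝ) * hreindex m σ)]
    rw [Finset.sum_add_distrib, ← Finset.mul_sum, ← Finset.mul_sum, ← Finset.sum_mul,
      ← Finset.mul_sum, ← mul_add]
  rw [h2σ, h3σ]
  linear_combination
    (((Equiv.Perm.sign σ : ℤ) : ℝ)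
        * Om u i' (![j₁, j₂, j₃, j₄] (σ 2)) (![j₁, j₂, j₃, j₄] (σ 3)) x) * pa
    + (((Equiv.Perm.sign σ : ℤ) : ℝ)
        * Om u i (![j₁, j₂, j₃, j₄] (σ 0)) (![j₁, j₂, j₃, j₄] (σ 1)) x) * pb


end Main
end RSFAux

/-- Corollary 1: for a real Schur flow solving the barotropic Euler equation,
(a) any constant-coefficient linear combination of the components `Ω_i` is Lie-transported
by `u` (in the 2-form sense), and (b) any wedge product `Ω_i ∧ Ω_{i'}` is Lie-transported
by `u` (in the 4-form sense). -/
theorem rsf_corollary_combinations_and_wedges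
    {d : ℕ} (hd : 3 ≤ d)
    (u : Fin d → ℝ × (Fin d → ℝ) → ℝ) (P : ℝ × (Fin d → ℝ) → ℝ)
    (hu : ∀ k, ContDiff ℝ (⊤ : ℕ∞) (u k)) (hP : ContDiff ℝ (⊤ : ℕ∞) P)
    (hRSF : IsRSF u)
    (heuler : ∀ k p, pdt (u k) p + ∑ j, u j p * pdx j (u k) p = -(pdx k P p))
    (U : ℕ → Fin d → ℝ × (Fin d → ℝ) → ℝ)
    (hU : ∀ (i : ℕ) (k : Fin d), U i k =
      if (k : ℕ) + 1 = 2 * i - 1 ∨ (k : ℕ) + 1 = 2 * i then u k else fun _ => 0)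
    (Ω : ℕ → Fin d → Fin d → ℝ × (Fin d → ℝ) → ℝ)
    (hΩ : ∀ i j k x, Ω i j k x = pdx j (U i k) x - pdx k (U i j) x) :
    (∀ (c : ℕ → ℝ) (W : Fin d → Fin d → ℝ × (Fin d → ℝ) → ℝ),
      (∀ j k x, W j k x = ∑ i ∈ Finset.Icc 1 ((d + 1) / 2), c i * Ω i j k x) →
      ∀ j k x, pdt (W j k) x
        + ∑ m, (u m x * pdx m (W j k) x + W m k x * pdx j (u m) x + W j m x * pdx k (u m) x)
        = 0) ∧
    (∀ i ∈ Finset.Icc 1 ((d + 1) / 2), ∀ i' ∈ Finset.Icc 1 ((d + 1) / 2),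
      ∀ W : Fin d → Fin d → Fin d → Fin d → ℝ × (Fin d → ℝ) → ℝ,
      (∀ (j₁ j₂ j₃ j₄ : Fin d) (x : ℝ × (Fin d → ℝ)),
        W j₁ j₂ j₃ j₄ x = (1 / 4 : ℝ)
          * ∑ σ : Equiv.Perm (Fin 4), ((Equiv.Perm.sign σ : ℤ) : ℝ)
              * (Ω i (![j₁, j₂, j₃, j₄] (σ 0)) (![j₁, j₂, j₃, j₄] (σ 1)) x
                 * Ω i' (![j₁, j₂, j₃, j₄] (σ 2)) (![j₁, j₂, j₃, j₄] (σ 3)) x)) →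
      ∀ (j₁ j₂ j₃ j₄ : Fin d) (x : ℝ × (Fin d → ℝ)),
        pdt (W j₁ j₂ j₃ j₄) x + ∑ m, u m x * pdx m (W j₁ j₂ j₃ j₄) x
          + ∑ m, (W m j₂ j₃ j₄ x * pdx j₁ (u m) x + W j₁ m j₃ j₄ x * pdx j₂ (u m) x
              + W j₁ j₂ m j₄ x * pdx j₃ (u m) x + W j₁ j₂ j₃ m x * pdx j₄ (u m) x)
          = 0) := by
  have hUp : ∀ (i : ℕ) (a b : Fin d) (y : ℝ × (Fin d → ℝ)),
      pdx a (U i b) y = RSFAux.chi i b * pdx a (u b) y := by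
    intro i a b y
    by_cases h : (b : ℕ) + 1 = 2 * i - 1 ∨ (b : ℕ) + 1 = 2 * i
    · rw [hU i b, if_pos h, RSFAux.chi, if_pos h, one_mul]
    · rw [hU i b, if_neg h, RSFAux.chi, if_neg h, zero_mul]
      exact RSFAux.pdv_zero_fn _ _
  have hΩOm : ∀ (i : ℕ) (a b : Fin d), Ω i a b = RSFAux.Om u i a b := by
    intro i a b
    funext y
    rw [hΩ, hUp, hUp]
    rfl
  constructor
  · intro c W hW j k x
    refine RSFAux.lemPartA u P hu hP hRSF heuler (Finset.Icc 1 ((d + 1) / 2))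
      (fun i hi => (Finset.mem_Icc.mp hi).1) c W ?_ j k x
    intro a b
    funext y
    rw [hW a b y]
    exact Finset.sum_congr rfl fun i _ => by rw [hΩOm]
  · intro i hi i' hi' W hW j₁ j₂ j₃ j₄ x
    refine RSFAux.lemPartB u P hu hP hRSF heuler i i'
      (Finset.mem_Icc.mp hi).1 (Finset.mem_Icc.mp hi').1 W ?_ j₁ j₂ j₃ j₄ x
    intro a b cc e y
    rw [hW a b cc e y]
    refine congrArg _ (Finset.sum_congr rfl fun σ _ => ?_)
    rw [hΩOm, hΩOm]
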